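/- For all natural numbers m, n, q, the following identity among Bernoulli numbers holds: (-1)^m · Σ_{k=0}^{m+q} C(m+q, k) · C(n+q+k, q) · B_{n+k} − (-1)^{n+q} · Σ_{k=0}^{n+q} C(n+q, k) · C(m+q+k, q) · B_{m+k} = 0, where C(a, b) denotes the binomial coefficient. -/

import Mathlib

set_option maxRecDepth 4000

open Finset in
-- subset-chain identity, unconditional in the upper bound
lemma my_choose_swap (N t s : ℕ) (hs : s ≤ t) :
    N.choose s * (N - s).choose (t - s) = N.choose t * t.choose s := by
  rcases le_or_gt t N with h | h
  · exact (Nat.choose_mul (n := N) hs).symm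
  · rcases le_or_gt s N with h2 | h2
    · rw [Nat.choose_eq_zero_of_lt (show N - s < t - s by omega),
        Nat.choose_eq_zero_of_lt h, mul_zero, zero_mul]
    · rw [Nat.choose_eq_zero_of_lt h2, Nat.choose_eq_zero_of_lt h, zero_mul, zero_mul]

open Finset in
-- Vandermonde over a range
lemma my_vand (a b N : ℕ) :
    ∑ i ∈ range (N + 1), a.choose i * b.choose (N - i) = (a + b).choose N := by
  rw [Nat.add_choose_eq]
  exact (Finset.Nat.sum_antidiagonal_eq_sum_range_succ (fun i j => a.choose i * b.choose j) N).symm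

open Finset in
-- duality for Bernoulli numbers
lemma my_bern_dual (N : ℕ) :
    ∑ j ∈ range (N + 1), (N.choose j : ℚ) * _root_.bernoulli j = (-1 : ℚ) ^ N * _root_.bernoulli N := by
  rw [Finset.sum_range_succ, _root_.sum_bernoulli, Nat.choose_self]
  by_cases h : N = 1
  · subst h; norm_num [bernoulli_one]
  · rw [if_neg h, bernoulli_eq_bernoulli'_of_ne_one h]
    rcases Nat.even_or_odd N with he | ho
    · rw [he.neg_one_pow]; ring
    · rw [bernoulli'_eq_zero_of_odd ho (by rcases ho with ⟨c, hc⟩; omega)]; ring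

open Finset Polynomial in
lemma my_term_coeff (q j a b i r : ℕ) (c : ℚ) :
    ((C (C c) * (((X + 1) ^ a * X ^ i) * C ((X + 1 : ℚ[X]) ^ b * X ^ r)) : (ℚ[X])[X]).coeff q).coeff j
      = c * ((if i ≤ q then (a.choose (q - i) : ℚ) else 0) *
          (if r ≤ j then (b.choose (j - r) : ℚ) else 0)) := by
  rw [coeff_C_mul, coeff_mul_C, coeff_mul_X_pow', coeff_X_add_one_pow, coeff_C_mul]
  by_cases hi : i ≤ q
  · simp only [if_pos hi, ← C_eq_natCast, coeff_C_mul, coeff_mul_X_pow', coeff_X_add_one_pow]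
  · simp [if_neg hi]

open Finset Polynomial in
lemma my_pair_coeff (q j a b : ℕ) :
    (((((X : (ℚ[X])[X]) + 1) ^ a * C ((X + 1 : ℚ[X]) ^ b)).coeff q).coeff j)
      = (a.choose q : ℚ) * (b.choose j : ℚ) := by
  rw [coeff_mul_C, coeff_X_add_one_pow, ← C_eq_natCast, coeff_C_mul, coeff_X_add_one_pow]

open Finset Polynomial in
lemma my_F_eq (m n q : ℕ) :
    (∑ k ∈ range (m + q + 1), C (C ((-1 : ℚ) ^ k * ((m + q).choose k : ℚ))) *
        (((X : (ℚ[X])[X]) + 1) ^ (n + q + k) * C ((X + 1 : ℚ[X]) ^ (n + k))))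
      = C (C ((-1 : ℚ) ^ (m + q))) *
          ((((X : (ℚ[X])[X]) + 1) ^ (n + q) * C ((X + 1 : ℚ[X]) ^ n)) *
            (X * C (X + 1) + C X) ^ (m + q)) := by
  calc
    (∑ k ∈ range (m + q + 1), C (C ((-1 : ℚ) ^ k * ((m + q).choose k : ℚ))) *
        (((X : (ℚ[X])[X]) + 1) ^ (n + q + k) * C ((X + 1 : ℚ[X]) ^ (n + k))))
        = ∑ k ∈ range (m + q + 1),
            ((-1 : (ℚ[X])[X]) ^ k * (((X + 1) * C (X + 1 : ℚ[X]))) ^ k * 1 ^ (m + q - k) *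
              ((m + q).choose k : (ℚ[X])[X])) *
            ((X + 1) ^ (n + q) * C ((X + 1 : ℚ[X]) ^ n)) := by
      refine Finset.sum_congr rfl fun k _ => ?_
      simp only [C_mul, C_pow, C_neg, C_1, C_eq_natCast, mul_pow, one_pow]
      ring
    _ = ∑ k ∈ range (m + q + 1),
            ((-(((X : (ℚ[X])[X]) + 1) * C (X + 1 : ℚ[X]))) ^ k * 1 ^ (m + q - k) *
              ((m + q).choose k : (ℚ[X])[X])) *
            ((X + 1) ^ (n + q) * C ((X + 1 : ℚ[X]) ^ n)) := by
      refine Finset.sum_congr rfl fun k _ => ?_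
      rw [neg_pow (((X : (ℚ[X])[X]) + 1) * C (X + 1 : ℚ[X]))]
    _ = ((-(((X : (ℚ[X])[X]) + 1) * C (X + 1 : ℚ[X])) + 1) ^ (m + q)) *
          ((X + 1) ^ (n + q) * C ((X + 1 : ℚ[X]) ^ n)) := by
      rw [← Finset.sum_mul, ← add_pow]
    _ = C (C ((-1 : ℚ) ^ (m + q))) *
          ((((X : (ℚ[X])[X]) + 1) ^ (n + q) * C ((X + 1 : ℚ[X]) ^ n)) *
            (X * C (X + 1) + C X) ^ (m + q)) := by
      have h : (-(((X : (ℚ[X])[X]) + 1) * C (X + 1 : ℚ[X])) + 1)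
          = C (C (-1 : ℚ)) * (X * C (X + 1) + C X) := by
        simp only [C_add, C_1, C_neg]
        ring
      rw [h, mul_pow, ← C_pow, ← C_pow]
      ring

open Finset Polynomial in
lemma my_G_expand (m n q : ℕ) :
    ((((X : (ℚ[X])[X]) + 1) ^ (n + q) * C ((X + 1 : ℚ[X]) ^ n)) *
        (X * C (X + 1) + C X) ^ (m + q))
      = ∑ i ∈ range (m + q + 1), C (C (((m + q).choose i : ℚ))) *
          ((((X : (ℚ[X])[X]) + 1) ^ (n + q) * X ^ i) *
            C ((X + 1 : ℚ[X]) ^ (n + i) * X ^ (m + q - i))) := by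
  rw [add_pow (R := (ℚ[X])[X]) (X * C (X + 1)) (C X) (m + q), Finset.mul_sum]
  refine Finset.sum_congr rfl fun i hi => ?_
  simp only [C_mul, C_pow, C_eq_natCast, mul_pow]
  ring

open Finset Polynomial in
lemma my_arith (m n q j : ℕ) :
    ∑ i ∈ range (m + q + 1), ((m + q).choose i : ℚ) *
        ((if i ≤ q then ((n + q).choose (q - i) : ℚ) else 0) *
          (if m + q - i ≤ j then ((n + i).choose (j - (m + q - i)) : ℚ) else 0))
      = if m ≤ j then ((n + q).choose (j - m) : ℚ) * ((j + q).choose q : ℚ) else 0 := by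
  by_cases hmj : m ≤ j
  · rw [if_pos hmj]
    rw [← Finset.sum_subset (Finset.range_subset_range.mpr (show q + 1 ≤ m + q + 1 by omega))
        (fun i _ hi => by rw [if_neg (by simp at hi ⊢; omega), zero_mul, mul_zero])]
    have step : ∀ i ∈ range (q + 1),
        ((m + q).choose i : ℚ) *
          ((if i ≤ q then ((n + q).choose (q - i) : ℚ) else 0) *
            (if m + q - i ≤ j then ((n + i).choose (j - (m + q - i)) : ℚ) else 0))
        = ((n + q).choose (j - m) : ℚ) * (((m + q).choose i : ℚ) * ((j - m).choose (q - i) : ℚ)) := by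
      intro i hi
      have hiq : i ≤ q := by simp at hi; omega
      rw [if_pos hiq]
      by_cases hg : m + q - i ≤ j
      · rw [if_pos hg]
        have h' : ((n + q).choose (q - i) : ℚ) * (((n + q) - (q - i)).choose ((j - m) - (q - i)) : ℚ)
            = ((n + q).choose (j - m) : ℚ) * ((j - m).choose (q - i) : ℚ) := by
          exact_mod_cast congrArg (Nat.cast : ℕ → ℚ)
            (my_choose_swap (n + q) (j - m) (q - i) (by omega))
        rw [show n + i = (n + q) - (q - i) by omega,
          show j - (m + q - i) = (j - m) - (q - i) by omega]
        linear_combination (((m + q).choose i : ℚ)) * h'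
      · rw [if_neg hg, Nat.choose_eq_zero_of_lt (show j - m < q - i by omega)]
        simp
    rw [Finset.sum_congr rfl step, ← Finset.mul_sum]
    have hv : ∑ i ∈ range (q + 1), (((m + q).choose i : ℚ) * ((j - m).choose (q - i) : ℚ))
        = ((j + q).choose q : ℚ) := by
      have := my_vand (m + q) (j - m) q
      rw [show m + q + (j - m) = j + q by omega] at this
      exact_mod_cast congrArg (Nat.cast : ℕ → ℚ) this
    rw [hv]
  · rw [if_neg hmj]
    refine Finset.sum_eq_zero fun i hi => ?_
    by_cases hiq : i ≤ q
    · rw [if_neg (show ¬ (m + q - i ≤ j) by omega), mul_zero, mul_zero]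
    · rw [if_neg hiq, zero_mul, mul_zero]

open Finset Polynomial in
lemma my_S (m n q j : ℕ) :
    ∑ k ∈ range (m + q + 1), (-1 : ℚ) ^ k * ((m + q).choose k : ℚ) *
        ((n + q + k).choose q : ℚ) * ((n + k).choose j : ℚ)
      = (-1 : ℚ) ^ (m + q) *
          (if m ≤ j then ((n + q).choose (j - m) : ℚ) * ((j + q).choose q : ℚ) else 0) := by
  calc
    ∑ k ∈ range (m + q + 1), (-1 : ℚ) ^ k * ((m + q).choose k : ℚ) *
        ((n + q + k).choose q : ℚ) * ((n + k).choose j : ℚ)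
        = (((∑ k ∈ range (m + q + 1), C (C ((-1 : ℚ) ^ k * ((m + q).choose k : ℚ))) *
            (((X : (ℚ[X])[X]) + 1) ^ (n + q + k) * C ((X + 1 : ℚ[X]) ^ (n + k)))).coeff q).coeff j) := by
      rw [finset_sum_coeff, finset_sum_coeff]
      refine Finset.sum_congr rfl fun k _ => ?_
      rw [coeff_C_mul, coeff_C_mul, my_pair_coeff]
      ring
    _ = (((C (C ((-1 : ℚ) ^ (m + q))) *
          ((((X : (ℚ[X])[X]) + 1) ^ (n + q) * C ((X + 1 : ℚ[X]) ^ n)) *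
            (X * C (X + 1) + C X) ^ (m + q))).coeff q).coeff j) := by rw [my_F_eq]
    _ = (-1 : ℚ) ^ (m + q) *
          ((((((X : (ℚ[X])[X]) + 1) ^ (n + q) * C ((X + 1 : ℚ[X]) ^ n)) *
            (X * C (X + 1) + C X) ^ (m + q)).coeff q).coeff j) := by
      rw [coeff_C_mul, coeff_C_mul]
    _ = (-1 : ℚ) ^ (m + q) *
          ∑ i ∈ range (m + q + 1), ((m + q).choose i : ℚ) *
            ((if i ≤ q then ((n + q).choose (q - i) : ℚ) else 0) *
              (if m + q - i ≤ j then ((n + i).choose (j - (m + q - i)) : ℚ) else 0)) := by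
      rw [my_G_expand, finset_sum_coeff, finset_sum_coeff]
      congr 1
      exact Finset.sum_congr rfl fun i _ => my_term_coeff q j (n + q) (n + i) i (m + q - i) _
    _ = (-1 : ℚ) ^ (m + q) *
          (if m ≤ j then ((n + q).choose (j - m) : ℚ) * ((j + q).choose q : ℚ) else 0) := by
      rw [my_arith]

open Finset in
theorem bernoulli_identity_general (m n q : ℕ) :
    (-1 : ℚ) ^ m *
        ∑ k ∈ Finset.range (m + q + 1),
          ((m + q).choose k : ℚ) * ((n + q + k).choose q : ℚ) * bernoulli (n + k) -
      (-1 : ℚ) ^ (n + q) *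
        ∑ k ∈ Finset.range (n + q + 1),
          ((n + q).choose k : ℚ) * ((m + q + k).choose q : ℚ) * bernoulli (m + k) = 0 := by
  rw [sub_eq_zero]
  have hdual : ∀ k ∈ range (m + q + 1),
      _root_.bernoulli (n + k) = (-1 : ℚ) ^ (n + k) *
        ∑ j ∈ range (m + n + q + 1), ((n + k).choose j : ℚ) * _root_.bernoulli j := by
    intro k hk
    simp only [Finset.mem_range] at hk
    have h1 : ∑ j ∈ range (n + k + 1), ((n + k).choose j : ℚ) * _root_.bernoulli j
        = ∑ j ∈ range (m + n + q + 1), ((n + k).choose j : ℚ) * _root_.bernoulli j := by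
      refine Finset.sum_subset (Finset.range_subset_range.mpr (by omega)) fun j hj hj2 => ?_
      simp only [Finset.mem_range] at hj hj2
      rw [Nat.choose_eq_zero_of_lt (by omega)]
      simp
    rw [← h1, my_bern_dual (n + k), ← mul_assoc, ← pow_add,
      show n + k + (n + k) = 2 * (n + k) by ring, pow_mul]
    norm_num
  have hsign : ((-1 : ℚ) ^ (m + n)) * ((-1 : ℚ) ^ (m + q)) = (-1 : ℚ) ^ (n + q) := by
    rw [← pow_add, show m + n + (m + q) = 2 * m + (n + q) by ring, pow_add, pow_mul]
    norm_num
  calc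
    (-1 : ℚ) ^ m * ∑ k ∈ Finset.range (m + q + 1),
        ((m + q).choose k : ℚ) * ((n + q + k).choose q : ℚ) * bernoulli (n + k)
        = ∑ k ∈ range (m + q + 1), ∑ j ∈ range (m + n + q + 1),
            ((-1 : ℚ) ^ (m + n) * _root_.bernoulli j) *
              ((-1 : ℚ) ^ k * ((m + q).choose k : ℚ) * ((n + q + k).choose q : ℚ) *
                ((n + k).choose j : ℚ)) := by
      rw [Finset.mul_sum]
      refine Finset.sum_congr rfl fun k hk => ?_
      rw [hdual k hk]
      calc
        (-1 : ℚ) ^ m * (((m + q).choose k : ℚ) * ((n + q + k).choose q : ℚ) *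
            ((-1 : ℚ) ^ (n + k) *
              ∑ j ∈ range (m + n + q + 1), ((n + k).choose j : ℚ) * _root_.bernoulli j))
            = ∑ j ∈ range (m + n + q + 1),
                ((-1 : ℚ) ^ m * (((m + q).choose k : ℚ) * ((n + q + k).choose q : ℚ) *
                  (-1 : ℚ) ^ (n + k))) * (((n + k).choose j : ℚ) * _root_.bernoulli j) := by
          rw [← Finset.mul_sum]
          ring
        _ = _ := by
          refine Finset.sum_congr rfl fun j _ => ?_
          ring
    _ = ∑ j ∈ range (m + n + q + 1),
          ((-1 : ℚ) ^ (m + n) * _root_.bernoulli j) *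
            ((-1 : ℚ) ^ (m + q) *
              (if m ≤ j then ((n + q).choose (j - m) : ℚ) * ((j + q).choose q : ℚ) else 0)) := by
      rw [Finset.sum_comm]
      refine Finset.sum_congr rfl fun j _ => ?_
      rw [← Finset.mul_sum, my_S m n q j]
    _ = ∑ j ∈ range (m + n + q + 1),
          (if m ≤ j then (-1 : ℚ) ^ (n + q) *
            (((n + q).choose (j - m) : ℚ) * ((j + q).choose q : ℚ) * _root_.bernoulli j)
           else 0) := by
      refine Finset.sum_congr rfl fun j _ => ?_
      by_cases hmj : m ≤ j
      · rw [if_pos hmj, if_pos hmj]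
        linear_combination (_root_.bernoulli j * (((n + q).choose (j - m) : ℚ) *
          ((j + q).choose q : ℚ))) * hsign
      · rw [if_neg hmj, if_neg hmj, mul_zero, mul_zero]
    _ = ∑ j ∈ Finset.Ico m (m + n + q + 1),
          (-1 : ℚ) ^ (n + q) *
            (((n + q).choose (j - m) : ℚ) * ((j + q).choose q : ℚ) * _root_.bernoulli j) := by
      rw [Finset.range_eq_Ico,
        ← Finset.sum_Ico_consecutive _ (Nat.zero_le m) (show m ≤ m + n + q + 1 by omega)]
      rw [Finset.sum_eq_zero fun j hj => if_neg (by simp at hj; omega), zero_add]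
      exact Finset.sum_congr rfl fun j hj => if_pos (by simp at hj; omega)
    _ = ∑ k ∈ range (n + q + 1),
          (-1 : ℚ) ^ (n + q) *
            (((n + q).choose k : ℚ) * ((m + q + k).choose q : ℚ) * _root_.bernoulli (m + k)) := by
      rw [Finset.sum_Ico_eq_sum_range, show m + n + q + 1 - m = n + q + 1 by omega]
      refine Finset.sum_congr rfl fun k _ => ?_
      rw [show m + k - m = k by omega, show m + k + q = m + q + k by omega]
    _ = (-1 : ℚ) ^ (n + q) * ∑ k ∈ Finset.range (n + q + 1),
          ((n + q).choose k : ℚ) * ((m + q + k).choose q : ℚ) * bernoulli (m + k) := by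
      rw [Finset.mul_sum]
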